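/- Let F be a field of characteristic 2, let a,x ∈ F* and c₁,…,c_s ∈ F*, and let φ = a[1,x] ⊥ ⟨1,c₁,…,c_s⟩ be an anisotropic quadratic form over F. Let K/F be a field extension such that the Witt index of φ_K equals 1. Then the quaternion algebra [x,a) becomes split over the field K(√c₁,…,√c_s) obtained from K by adjoining square roots of c₁,…,c_s, i.e. [x,a) ⊗_F K(√c₁,…,√c_s) is isomorphic to the 2×2 matrix algebra over K(√c₁,…,√c_s). -/

import Mathlib

open QuadraticMap MvPolynomial
open scoped TensorProduct

set_option synthInstance.maxHeartbeats 1000000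
set_option maxHeartbeats 1000000


section Defs

variable {K : Type} [CommRing K]

/-- The binary quadratic form `[a,b] : (x,y) ↦ a·x² + x·y + b·y²`. -/
noncomputable def binQF (a b : K) : QuadraticForm K (Fin 2 → K) :=
  (Matrix.of ![![a, 1], ![0, b]]).toQuadraticMap'

/-- The diagonal (totally singular) quadratic form `⟨c₁, …, c_s⟩`. -/
noncomputable def diagQF {s : ℕ} (c : Fin s → K) : QuadraticForm K (Fin s → K) :=
  QuadraticMap.weightedSumSquares K c

/-- The orthogonal sum `[a₁,b₁] ⊥ ⋯ ⊥ [a_r,b_r]` of binary forms. -/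
noncomputable def binsQF {r : ℕ} (a b : Fin r → K) : QuadraticForm K (Fin r → Fin 2 → K) :=
  QuadraticMap.pi fun i => binQF (a i) (b i)

/-- The orthogonal sum of `m` hyperbolic planes `[0,0]`. -/
noncomputable def hypQF (K : Type) [CommRing K] (m : ℕ) :
    QuadraticForm K (Fin m → Fin 2 → K) :=
  binsQF (fun _ => 0) (fun _ => 0)

/-- The `(n+1)`-fold quadratic Pfister form `⟨⟨a₁,…,aₙ⟩⟩_b ⊗ [1,c]`, i.e. the orthogonal
sum over all subsets `S ⊆ {1,…,n}` of `(∏_{i∈S} aᵢ)·[1,c]`. -/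
noncomputable def pfisterQF (n : ℕ) (a : Fin n → K) (c : K) :
    QuadraticForm K (Finset (Fin n) → Fin 2 → K) :=
  QuadraticMap.pi fun S : Finset (Fin n) => (∏ i ∈ S, a i) • binQF 1 c

variable {V W : Type} [AddCommGroup V] [Module K V] [AddCommGroup W] [Module K W]

/-- `φ` has type `(r,s)`: it is isometric to `[a₁,b₁] ⊥ ⋯ ⊥ [a_r,b_r] ⊥ ⟨c₁,…,c_s⟩`. -/
def HasTypeRS (φ : QuadraticForm K V) (r s : ℕ) : Prop :=
  ∃ (a b : Fin r → K) (c : Fin s → K), φ.Equivalent ((binsQF a b).prod (diagQF c))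

/-- `φ` is dominated by `ψ`. -/
def Dominated (φ : QuadraticForm K V) (ψ : QuadraticForm K W) : Prop :=
  ∃ f : V →ₗ[K] W, Function.Injective f ∧ ∀ v, φ v = ψ (f v)

/-- `φ` is weakly dominated by `ψ`: `α·φ` is dominated by `ψ` for some unit `α`. -/
def WeaklyDominated (φ : QuadraticForm K V) (ψ : QuadraticForm K W) : Prop :=
  ∃ α : Kˣ, Dominated ((α : K) • φ) ψ

/-- Witt equivalence of quadratic forms. -/
def WittEquiv (Q₁ : QuadraticForm K V) (Q₂ : QuadraticForm K W) : Prop :=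
  ∃ k l : ℕ, (Q₁.prod (hypQF K k)).Equivalent (Q₂.prod (hypQF K l))

/-- `φ` is a Pfister neighbour: there is a quadratic Pfister form `π` with
`2·dim φ > dim π` and `φ ≺_w π`. -/
def IsPfisterNeighbour (φ : QuadraticForm K V) : Prop :=
  ∃ (n : ℕ) (a : Fin n → Kˣ) (c : K),
    2 * Module.finrank K V > 2 ^ (n + 1) ∧
      WeaklyDominated φ (pfisterQF n (fun i => (a i : K)) c)

/-- The Artin–Schreier set `℘(K) = {t² + t : t ∈ K}`. -/
def ArtinSchreier (K : Type) [CommRing K] : Set K := {x : K | ∃ t : K, x = t ^ 2 + t}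

end Defs

section FunField

variable (F : Type) [Field F]

/-- The coefficient matrix of a quadratic form on `Fin n → F` with respect to the
standard basis: diagonal entries `ψ(eᵢ)`, above-diagonal entries `b_ψ(eᵢ,eⱼ)`. -/
noncomputable def coeffMat {n : ℕ} (ψ : QuadraticForm F (Fin n → F)) :
    Matrix (Fin n) (Fin n) F :=
  Matrix.of fun i j =>
    if i = j then ψ (Pi.single i 1)
    else if i < j then polar ψ (Pi.single i 1) (Pi.single j 1) else 0

/-- The homogeneous degree 2 polynomial `P_ψ` associated to a quadratic form `ψ`. -/
noncomputable def qfPoly {n : ℕ} (ψ : QuadraticForm F (Fin n → F)) :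
    MvPolynomial (Fin n) F :=
  ∑ i : Fin n, ∑ j : Fin n, MvPolynomial.C (coeffMat F ψ i j) * (X i * X j)

/-- The affine coordinate ring `F[x₁,…,xₙ]/(P_ψ)` of the quadric `ψ = 0`. -/
def FunFieldRing {n : ℕ} (ψ : QuadraticForm F (Fin n → F)) : Type :=
  MvPolynomial (Fin n) F ⧸ Ideal.span {qfPoly F ψ}

noncomputable instance {n : ℕ} (ψ : QuadraticForm F (Fin n → F)) :
    CommRing (FunFieldRing F ψ) :=
  inferInstanceAs (CommRing (MvPolynomial (Fin n) F ⧸ Ideal.span {qfPoly F ψ}))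

noncomputable instance {n : ℕ} (ψ : QuadraticForm F (Fin n → F)) :
    Algebra F (FunFieldRing F ψ) :=
  inferInstanceAs (Algebra F (MvPolynomial (Fin n) F ⧸ Ideal.span {qfPoly F ψ}))

/-- The function field `F(ψ)` of the quadric `ψ = 0`. -/
def FunField {n : ℕ} (ψ : QuadraticForm F (Fin n → F)) : Type :=
  FractionRing (FunFieldRing F ψ)

noncomputable instance {n : ℕ} (ψ : QuadraticForm F (Fin n → F)) :
    CommRing (FunField F ψ) :=
  inferInstanceAs (CommRing (FractionRing (FunFieldRing F ψ)))

noncomputable instance {n : ℕ} (ψ : QuadraticForm F (Fin n → F)) :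
    Algebra (FunFieldRing F ψ) (FunField F ψ) :=
  inferInstanceAs (Algebra (FunFieldRing F ψ) (FractionRing (FunFieldRing F ψ)))

noncomputable instance {n : ℕ} (ψ : QuadraticForm F (Fin n → F)) :
    Algebra F (FunField F ψ) :=
  inferInstanceAs (Algebra F (FractionRing (FunFieldRing F ψ)))

/-- The canonical map `F → F(ψ)`. -/
noncomputable def funFieldMap {n : ℕ} (ψ : QuadraticForm F (Fin n → F)) :
    F →+* FunField F ψ :=
  algebraMap F (FunField F ψ)

/-- Scalar extension of a quadratic form on `Fin n → F` along a ring homomorphism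
`f : F → K`. -/
noncomputable def extendQF {K : Type} [CommRing K] (f : F →+* K) {n : ℕ}
    (φ : QuadraticForm F (Fin n → F)) : QuadraticForm K (Fin n → K) :=
  ((coeffMat F φ).map f).toQuadraticMap'

end FunField


section Quat

variable (K : Type) [CommRing K]

/-- Defining relations for the char-2 quaternion algebra `[a,b)`: generators `i,j` with
`i² + i = a`, `j² = b`, `j·i = i·j + j` (i.e. `j·i·j⁻¹ = i + 1`). -/
inductive QuatRel (a b : K) : FreeAlgebra K (Fin 2) → FreeAlgebra K (Fin 2) → Prop
  | i_sq : QuatRel a b (FreeAlgebra.ι K 0 * FreeAlgebra.ι K 0 + FreeAlgebra.ι K 0)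
      (algebraMap K _ a)
  | j_sq : QuatRel a b (FreeAlgebra.ι K 1 * FreeAlgebra.ι K 1) (algebraMap K _ b)
  | swap : QuatRel a b (FreeAlgebra.ι K 1 * FreeAlgebra.ι K 0)
      (FreeAlgebra.ι K 0 * FreeAlgebra.ι K 1 + FreeAlgebra.ι K 1)

/-- The quaternion algebra `[a,b)` over `K` (characteristic two convention). -/
def QuatAlg (a b : K) : Type := RingQuot (QuatRel K a b)

noncomputable instance (a b : K) : Ring (QuatAlg K a b) :=
  inferInstanceAs (Ring (RingQuot (QuatRel K a b)))
noncomputable instance (a b : K) : Algebra K (QuatAlg K a b) :=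
  inferInstanceAs (Algebra K (RingQuot (QuatRel K a b)))

/-- `[a,b)` is split over `K`: isomorphic to the `2×2` matrix algebra. -/
def QuatSplit (a b : K) : Prop :=
  Nonempty (QuatAlg K a b ≃ₐ[K] Matrix (Fin 2) (Fin 2) K)

end Quat

section Sqrt

variable (F : Type) [Field F]

/-- The field `F(√c₁,…,√c_s)` obtained by adjoining square roots of the `cᵢ`
(inside an algebraic closure of `F`). -/
noncomputable def sqrtExt {s : ℕ} (c : Fin s → F) :
    IntermediateField F (AlgebraicClosure F) :=
  IntermediateField.adjoin F
    {y : AlgebraicClosure F | ∃ i, y ^ 2 = algebraMap F (AlgebraicClosure F) (c i)}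

/-- The subfield `F² = {x² : x ∈ F}` of squares of a field of characteristic 2. -/
noncomputable def sqSubfield : Subfield F := Subfield.closure (Set.range fun x : F => x ^ 2)

set_option synthInstance.maxHeartbeats 1000000 in
/-- The norm degree `[F²(cᵢ·cⱼ) : F²]` of a diagonal form `⟨c₁,…,c_s⟩`. -/
noncomputable def normDegree {s : ℕ} (c : Fin s → F) : ℕ :=
  Module.finrank (sqSubfield F)
    (IntermediateField.adjoin (sqSubfield F)
      (Set.range fun p : Fin s × Fin s => c p.1 * c p.2))

end Sqrt

/-- A ring is a division algebra if it is nontrivial and every nonzero element is a unit. -/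

lemma binQF_apply {K : Type} [CommRing K] (a b : K) (v : Fin 2 → K) :
    binQF a b v = a * v 0 ^ 2 + v 0 * v 1 + b * v 1 ^ 2 := by
  simp [binQF, Matrix.toQuadraticMap', Matrix.toQuadraticForm', LinearMap.BilinMap.toQuadraticMap_apply,
    Matrix.toLinearMap₂'_apply, Fin.sum_univ_two, Matrix.of_apply]
  ring

namespace QuatHelp

variable {L : Type} [Field L] (x a : L)

noncomputable def qi : QuatAlg L x a := RingQuot.mkAlgHom L (QuatRel L x a) (FreeAlgebra.ι L 0)
noncomputable def qj : QuatAlg L x a := RingQuot.mkAlgHom L (QuatRel L x a) (FreeAlgebra.ι L 1)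

lemma qi_sq : qi x a * qi x a + qi x a = algebraMap L _ x := by
  have h := RingQuot.mkAlgHom_rel L (QuatRel.i_sq (a := x) (b := a))
  rw [map_add, map_mul, AlgHom.commutes] at h
  exact h

lemma qj_sq : qj x a * qj x a = algebraMap L _ a := by
  have h := RingQuot.mkAlgHom_rel L (QuatRel.j_sq (a := x) (b := a))
  rw [map_mul, AlgHom.commutes] at h
  exact h

lemma qswap : qj x a * qi x a = qi x a * qj x a + qj x a := by
  have h := RingQuot.mkAlgHom_rel L (QuatRel.swap (a := x) (b := a))
  rw [map_add, map_mul, map_mul] at h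
  exact h

lemma quat_span :
    Submodule.span L ({1, qi x a, qj x a, qi x a * qj x a} : Set (QuatAlg L x a)) = ⊤ := by
  set i := qi x a with hidef
  set j := qj x a with hjdef
  set S := Submodule.span L ({1, i, j, i * j} : Set (QuatAlg L x a)) with hS
  have h1 : (1 : QuatAlg L x a) ∈ S := Submodule.subset_span (by simp)
  have hi : i ∈ S := Submodule.subset_span (by simp)
  have hj : j ∈ S := Submodule.subset_span (by simp)
  have hk : i * j ∈ S := Submodule.subset_span (by simp)
  have hii : i * i = algebraMap L _ x - i := eq_sub_of_add_eq (qi_sq x a)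
  have hji : j * i = i * j + j := qswap x a
  have hjj : j * j = algebraMap L _ a := qj_sq x a
  have halg : ∀ c : L, algebraMap L (QuatAlg L x a) c = c • 1 :=
    fun c => Algebra.algebraMap_eq_smul_one c
  -- products of generators
  have pii : i * i ∈ S := by
    rw [hii, halg]; exact Submodule.sub_mem _ (Submodule.smul_mem _ _ h1) hi
  have pik : i * (i * j) ∈ S := by
    have e : i * (i * j) = x • j - i * j := by
      rw [← mul_assoc, hii, sub_mul, halg, smul_mul_assoc, one_mul]
    rw [e]; exact Submodule.sub_mem _ (Submodule.smul_mem _ _ hj) hk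
  have pji : j * i ∈ S := by rw [hji]; exact Submodule.add_mem _ hk hj
  have pjj : j * j ∈ S := by
    rw [hjj, halg]; exact Submodule.smul_mem _ _ h1
  have pjk : j * (i * j) ∈ S := by
    have e : j * (i * j) = a • i + a • 1 := by
      rw [← mul_assoc, hji, add_mul, mul_assoc, hjj, halg, mul_smul_comm, mul_one]
    rw [e]; exact Submodule.add_mem _ (Submodule.smul_mem _ _ hi) (Submodule.smul_mem _ _ h1)
  have pki : (i * j) * i ∈ S := by
    have e : (i * j) * i = x • j := by
      rw [mul_assoc, hji, mul_add, ← mul_assoc, hii, sub_mul, halg, smul_mul_assoc, one_mul]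
      abel
    rw [e]; exact Submodule.smul_mem _ _ hj
  have pkj : (i * j) * j ∈ S := by
    have e : (i * j) * j = a • i := by
      rw [mul_assoc, hjj, halg, mul_smul_comm, mul_one]
    rw [e]; exact Submodule.smul_mem _ _ hi
  have pkk : (i * j) * (i * j) ∈ S := by
    have e : (i * j) * (i * j) = (a * x) • 1 - a • i + a • i := by
      rw [mul_assoc, ← mul_assoc j i j, hji, add_mul, mul_assoc i j j, hjj, mul_add,
        ← mul_assoc, hii, halg a, halg x, mul_smul_comm, mul_one, smul_sub, smul_smul,
        mul_smul_comm, mul_one]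
    rw [e]
    exact Submodule.add_mem _ (Submodule.sub_mem _ (Submodule.smul_mem _ _ h1)
      (Submodule.smul_mem _ _ hi)) (Submodule.smul_mem _ _ hi)
  -- closure under multiplication
  have hmulgen : ∀ g ∈ ({1, i, j, i * j} : Set (QuatAlg L x a)), ∀ w ∈ S, g * w ∈ S := by
    intro g hg w hw
    induction hw using Submodule.span_induction with
    | mem w hw =>
      simp only [Set.mem_insert_iff, Set.mem_singleton_iff] at hw hg
      rcases hw with rfl | rfl | rfl | rfl <;> rcases hg with rfl | rfl | rfl | rfl <;>
        first
          | exact hk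
          | exact pii | exact pik | exact pji | exact pjj | exact pjk
          | exact pki | exact pkj | exact pkk
          | (rw [one_mul]; first | exact h1 | exact hi | exact hj | exact hk)
          | (rw [mul_one]; first | exact h1 | exact hi | exact hj | exact hk)
    | zero => rw [mul_zero]; exact Submodule.zero_mem S
    | add w₁ w₂ _ _ ih₁ ih₂ => rw [mul_add]; exact Submodule.add_mem _ ih₁ ih₂
    | smul c w _ ih => rw [mul_smul_comm]; exact Submodule.smul_mem _ _ ih
  have hmul : ∀ z ∈ S, ∀ w ∈ S, z * w ∈ S := by
    intro z hz
    induction hz using Submodule.span_induction with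
    | mem z hzr => intro w hw; exact hmulgen _ hzr w hw
    | zero => intro w hw; rw [zero_mul]; exact Submodule.zero_mem S
    | add z₁ z₂ _ _ ih₁ ih₂ => intro w hw; rw [add_mul]; exact Submodule.add_mem _ (ih₁ w hw) (ih₂ w hw)
    | smul c z _ ih => intro w hw; rw [smul_mul_assoc]; exact Submodule.smul_mem _ _ (ih w hw)
  -- every element is in S
  rw [eq_top_iff]
  rintro z -
  obtain ⟨w, rfl⟩ := RingQuot.mkAlgHom_surjective L (QuatRel L x a) z
  induction w using FreeAlgebra.induction with
  | grade0 r =>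
    have hh : RingQuot.mkAlgHom L (QuatRel L x a) (algebraMap L _ r) = (r • 1 : QuatAlg L x a) := by
      rw [AlgHom.commutes]; exact halg r
    rw [hh]; exact Submodule.smul_mem _ _ h1
  | grade1 y =>
    fin_cases y
    · exact hi
    · exact hj
  | mul u v ihu ihv => rw [map_mul]; exact hmul _ ihu _ ihv
  | add u v ihu ihv => rw [map_add]; exact Submodule.add_mem _ ihu ihv


lemma quat_range_eq :
    Set.range ![(1 : QuatAlg L x a), qi x a, qj x a, qi x a * qj x a]
      = ({1, qi x a, qj x a, qi x a * qj x a} : Set (QuatAlg L x a)) := by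
  ext z
  simp [Matrix.range_cons, Matrix.range_empty]
  tauto

lemma quat_fd : FiniteDimensional L (QuatAlg L x a) :=
  ⟨Submodule.fg_def.mpr ⟨_, Set.toFinite _, quat_span x a⟩⟩

lemma quat_finrank_le : Module.finrank L (QuatAlg L x a) ≤ 4 := by
  have h := finrank_le_of_span_eq_top (R := L)
    (v := ![(1 : QuatAlg L x a), qi x a, qj x a, qi x a * qj x a]) ?_
  · simpa using h
  · rw [quat_range_eq]; exact quat_span x a

theorem quatSplit_of_matrix (I J : Matrix (Fin 2) (Fin 2) L)
    (h1 : I * I + I = x • 1) (h2 : J * J = a • 1) (h3 : J * I = I * J + J)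
    (hgen : ∀ p q : Fin 2, Matrix.single p q 1 ∈ Algebra.adjoin L ({I, J} :
      Set (Matrix (Fin 2) (Fin 2) L))) :
    QuatSplit L x a := by
  classical
  have halg : ∀ c : L, algebraMap L (Matrix (Fin 2) (Fin 2) L) c = c • 1 :=
    fun c => Algebra.algebraMap_eq_smul_one c
  set f : FreeAlgebra L (Fin 2) →ₐ[L] Matrix (Fin 2) (Fin 2) L :=
    FreeAlgebra.lift L ![I, J] with hf
  have hrel : ∀ ⦃u v : FreeAlgebra L (Fin 2)⦄, QuatRel L x a u v → f u = f v := by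
    intro u v h
    induction h with
    | i_sq => simp only [map_add, map_mul, hf, FreeAlgebra.lift_ι_apply, AlgHom.commutes]
              simpa [halg] using h1
    | j_sq => simp only [map_mul, hf, FreeAlgebra.lift_ι_apply, AlgHom.commutes]
              simpa [halg] using h2
    | swap => simp only [map_add, map_mul, hf, FreeAlgebra.lift_ι_apply]
              simpa using h3
  set φ : QuatAlg L x a →ₐ[L] Matrix (Fin 2) (Fin 2) L :=
    RingQuot.liftAlgHom L ⟨f, hrel⟩ with hφ
  have hφi : φ (qi x a) = I :=
    (RingQuot.liftAlgHom_mkAlgHom_apply (S := L) f hrel (FreeAlgebra.ι L 0)).trans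
      (by rw [hf, FreeAlgebra.lift_ι_apply]; rfl)
  have hφj : φ (qj x a) = J :=
    (RingQuot.liftAlgHom_mkAlgHom_apply (S := L) f hrel (FreeAlgebra.ι L 1)).trans
      (by rw [hf, FreeAlgebra.lift_ι_apply]; rfl)
  have hsurj : Function.Surjective φ := by
    have hIJ : ({I, J} : Set (Matrix (Fin 2) (Fin 2) L)) ⊆ φ.range := by
      rintro m (rfl | rfl)
      · exact ⟨qi x a, hφi⟩
      · exact ⟨qj x a, hφj⟩
    have hadj : Algebra.adjoin L ({I, J} : Set (Matrix (Fin 2) (Fin 2) L)) ≤ φ.range :=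
      Algebra.adjoin_le hIJ
    intro m
    have hm : m ∈ φ.range := by
      rw [Matrix.matrix_eq_sum_single m]
      apply Subalgebra.sum_mem
      intro p _
      apply Subalgebra.sum_mem
      intro q _
      have : Matrix.single p q (m p q) = m p q • Matrix.single p q 1 := by
        rw [Matrix.smul_single, smul_eq_mul, mul_one]
      rw [this]
      exact Subalgebra.smul_mem _ (hadj (hgen p q)) _
    exact hm
  haveI : FiniteDimensional L (QuatAlg L x a) := quat_fd x a
  have hfr : Module.finrank L (QuatAlg L x a) = Module.finrank L (Matrix (Fin 2) (Fin 2) L) := by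
    have h4 : Module.finrank L (Matrix (Fin 2) (Fin 2) L) = 4 := by
      rw [Module.finrank_matrix]; simp
    have hle : Module.finrank L (Matrix (Fin 2) (Fin 2) L)
        ≤ Module.finrank L (QuatAlg L x a) := by
      have h := LinearMap.finrank_range_le φ.toLinearMap
      have hrt : LinearMap.range φ.toLinearMap = ⊤ := LinearMap.range_eq_top.mpr hsurj
      rwa [hrt, finrank_top] at h
    have := quat_finrank_le x a
    omega
  have hinj : Function.Injective φ :=
    (LinearMap.injective_iff_surjective_of_finrank_eq_finrank (f := φ.toLinearMap) hfr).mpr hsurj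
  exact ⟨AlgEquiv.ofBijective φ ⟨hinj, hsurj⟩⟩

lemma stdBasis00 : Matrix.single (0:Fin 2) (0:Fin 2) (1:L) = !![1,0;0,0] := by
  ext p q; fin_cases p <;> fin_cases q <;> simp [Matrix.single]
lemma stdBasis01 : Matrix.single (0:Fin 2) (1:Fin 2) (1:L) = !![0,1;0,0] := by
  ext p q; fin_cases p <;> fin_cases q <;> simp [Matrix.single]
lemma stdBasis10 : Matrix.single (1:Fin 2) (0:Fin 2) (1:L) = !![0,0;1,0] := by
  ext p q; fin_cases p <;> fin_cases q <;> simp [Matrix.single]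
lemma stdBasis11 : Matrix.single (1:Fin 2) (1:Fin 2) (1:L) = !![0,0;0,1] := by
  ext p q; fin_cases p <;> fin_cases q <;> simp [Matrix.single]

lemma splitA (htwo : (2:L) = 0) (ha : a ≠ 0) (t : L) (hx : x = t^2 + t) :
    QuatSplit L x a := by
  subst hx
  apply quatSplit_of_matrix _ a !![t,0;0,t+1] !![0,1;a,0]
  · ext p q; fin_cases p <;> fin_cases q <;>
      simp [Matrix.mul_apply, Fin.sum_univ_two, Matrix.one_apply] <;>
      first
        | ring1
        | linear_combination (t+1)*htwo
        | linear_combination (-(t+1))*htwo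
  · ext p q; fin_cases p <;> fin_cases q <;>
      simp [Matrix.mul_apply, Fin.sum_univ_two, Matrix.one_apply]
  · ext p q; fin_cases p <;> fin_cases q <;>
      simp [Matrix.mul_apply, Fin.sum_univ_two, Matrix.one_apply] <;>
      first
        | ring1
        | linear_combination a*htwo
        | linear_combination (-a)*htwo
  · set I : Matrix (Fin 2) (Fin 2) L := !![t,0;0,t+1] with hI
    set J : Matrix (Fin 2) (Fin 2) L := !![0,1;a,0] with hJ
    have hIm : I ∈ Algebra.adjoin L ({I, J} : Set (Matrix (Fin 2) (Fin 2) L)) :=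
      Algebra.subset_adjoin (by simp)
    have hJm : J ∈ Algebra.adjoin L ({I, J} : Set (Matrix (Fin 2) (Fin 2) L)) :=
      Algebra.subset_adjoin (by simp)
    have h22 : (!![0,0;0,1] : Matrix (Fin 2) (Fin 2) L) = I - t • 1 := by
      ext p q; fin_cases p <;> fin_cases q <;>
        simp [hI, Matrix.one_apply]
    have m22 : (!![0,0;0,1] : Matrix (Fin 2) (Fin 2) L) ∈ Algebra.adjoin L {I, J} := by
      rw [h22]; exact Subalgebra.sub_mem _ hIm (Subalgebra.smul_mem _ (Subalgebra.one_mem _) t)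
    have h11 : (!![1,0;0,0] : Matrix (Fin 2) (Fin 2) L) = 1 - !![0,0;0,1] := by
      ext p q; fin_cases p <;> fin_cases q <;> simp [Matrix.one_apply]
    have m11 : (!![1,0;0,0] : Matrix (Fin 2) (Fin 2) L) ∈ Algebra.adjoin L {I, J} := by
      rw [h11]; exact Subalgebra.sub_mem _ (Subalgebra.one_mem _) m22
    have h12 : (!![0,1;0,0] : Matrix (Fin 2) (Fin 2) L) = J * !![0,0;0,1] := by
      ext p q; fin_cases p <;> fin_cases q <;>
        simp [hJ, Matrix.mul_apply, Fin.sum_univ_two]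
    have m12 : (!![0,1;0,0] : Matrix (Fin 2) (Fin 2) L) ∈ Algebra.adjoin L {I, J} := by
      rw [h12]; exact Subalgebra.mul_mem _ hJm m22
    have h21 : (!![0,0;1,0] : Matrix (Fin 2) (Fin 2) L) = a⁻¹ • (!![0,0;0,1] * J) := by
      ext p q; fin_cases p <;> fin_cases q <;>
        simp [hJ, Matrix.mul_apply, Fin.sum_univ_two] <;> field_simp
    have m21 : (!![0,0;1,0] : Matrix (Fin 2) (Fin 2) L) ∈ Algebra.adjoin L {I, J} := by
      rw [h21]; exact Subalgebra.smul_mem _ (Subalgebra.mul_mem _ m22 hJm) _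
    intro p q; fin_cases p <;> fin_cases q
    · show Matrix.single (0:Fin 2) (0:Fin 2) (1:L) ∈ Algebra.adjoin L ({I,J} : Set _)
      rw [stdBasis00]; exact m11
    · show Matrix.single (0:Fin 2) (1:Fin 2) (1:L) ∈ Algebra.adjoin L ({I,J} : Set _)
      rw [stdBasis01]; exact m12
    · show Matrix.single (1:Fin 2) (0:Fin 2) (1:L) ∈ Algebra.adjoin L ({I,J} : Set _)
      rw [stdBasis10]; exact m21
    · show Matrix.single (1:Fin 2) (1:Fin 2) (1:L) ∈ Algebra.adjoin L ({I,J} : Set _)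
      rw [stdBasis11]; exact m22

lemma mem_of_smul_eq {c : L} (hc : c ≠ 0) {E M : Matrix (Fin 2) (Fin 2) L}
    {S : Subalgebra L (Matrix (Fin 2) (Fin 2) L)} (h : c • E = M) (hM : M ∈ S) : E ∈ S := by
  have hE : E = c⁻¹ • M := by rw [← h, smul_smul, inv_mul_cancel₀ hc, one_smul]
  rw [hE]; exact S.smul_mem hM _

lemma splitB (htwo : (2:L) = 0) (hx : x ≠ 0) (ha : a ≠ 0) (p q : L) (hq : q ≠ 0)
    (heq : p^2 + p*q + x*q^2 = a) : QuatSplit L x a := by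
  apply quatSplit_of_matrix x a !![0,x;1,1] !![p,p+x*q;q,p]
  · ext i j; fin_cases i <;> fin_cases j <;>
      simp [Matrix.mul_apply, Fin.sum_univ_two, Matrix.one_apply] <;>
      first
        | ring1
        | linear_combination x*htwo
        | linear_combination htwo
  · ext i j; fin_cases i <;> fin_cases j <;>
      simp [Matrix.mul_apply, Fin.sum_univ_two, Matrix.one_apply] <;>
      first
        | ring1
        | linear_combination heq
        | linear_combination (p^2+x*p*q)*htwo
        | linear_combination (p*q)*htwo
  · ext i j; fin_cases i <;> fin_cases j <;>
      simp [Matrix.mul_apply, Fin.sum_univ_two, Matrix.one_apply] <;>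
      first
        | ring1
        | linear_combination (-q)*htwo
        | linear_combination (-p)*htwo
  · set I : Matrix (Fin 2) (Fin 2) L := !![0,x;1,1] with hI
    set J : Matrix (Fin 2) (Fin 2) L := !![p,p+x*q;q,p] with hJ
    have hIm : I ∈ Algebra.adjoin L ({I, J} : Set (Matrix (Fin 2) (Fin 2) L)) :=
      Algebra.subset_adjoin (by simp)
    have hJm : J ∈ Algebra.adjoin L ({I, J} : Set (Matrix (Fin 2) (Fin 2) L)) :=
      Algebra.subset_adjoin (by simp)
    have hA : (!![0,0;q,p] : Matrix (Fin 2) (Fin 2) L) = I * J + p • I + (x*q) • 1 := by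
      ext i j; fin_cases i <;> fin_cases j <;>
        simp [hI, hJ, Matrix.mul_apply, Fin.sum_univ_two, Matrix.one_apply] <;>
        first
          | ring1
          | linear_combination (-(x*q))*htwo
          | linear_combination (-(x*p))*htwo
          | linear_combination (-p)*htwo
          | linear_combination (-(p+x*q))*htwo
    have mA : (!![0,0;q,p] : Matrix (Fin 2) (Fin 2) L) ∈ Algebra.adjoin L {I, J} := by
      rw [hA]
      exact Subalgebra.add_mem _ (Subalgebra.add_mem _ (Subalgebra.mul_mem _ hIm hJm)
        (Subalgebra.smul_mem _ hIm p)) (Subalgebra.smul_mem _ (Subalgebra.one_mem _) _)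
    have h22 : a • (!![0,0;0,1] : Matrix (Fin 2) (Fin 2) L) = !![0,0;q,p] * J := by
      ext i j; fin_cases i <;> fin_cases j <;>
        simp [hJ, Matrix.mul_apply, Fin.sum_univ_two] <;>
        first
          | ring1
          | linear_combination (-(p*q))*htwo
          | linear_combination (-1 : L)*heq
          | linear_combination heq
    have m22 : (!![0,0;0,1] : Matrix (Fin 2) (Fin 2) L) ∈ Algebra.adjoin L {I, J} :=
      mem_of_smul_eq ha h22 (Subalgebra.mul_mem _ mA hJm)
    have h11 : (!![1,0;0,0] : Matrix (Fin 2) (Fin 2) L) = 1 - !![0,0;0,1] := by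
      ext i j; fin_cases i <;> fin_cases j <;> simp [Matrix.one_apply]
    have m11 : (!![1,0;0,0] : Matrix (Fin 2) (Fin 2) L) ∈ Algebra.adjoin L {I, J} := by
      rw [h11]; exact Subalgebra.sub_mem _ (Subalgebra.one_mem _) m22
    have h21 : q • (!![0,0;1,0] : Matrix (Fin 2) (Fin 2) L) = !![0,0;q,p] * !![1,0;0,0] := by
      ext i j; fin_cases i <;> fin_cases j <;>
        simp [Matrix.mul_apply, Fin.sum_univ_two]
    have m21 : (!![0,0;1,0] : Matrix (Fin 2) (Fin 2) L) ∈ Algebra.adjoin L {I, J} :=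
      mem_of_smul_eq hq h21 (Subalgebra.mul_mem _ mA m11)
    have h12 : x • (!![0,1;0,0] : Matrix (Fin 2) (Fin 2) L) = !![1,0;0,0] * I := by
      ext i j; fin_cases i <;> fin_cases j <;>
        simp [hI, Matrix.mul_apply, Fin.sum_univ_two]
    have m12 : (!![0,1;0,0] : Matrix (Fin 2) (Fin 2) L) ∈ Algebra.adjoin L {I, J} :=
      mem_of_smul_eq hx h12 (Subalgebra.mul_mem _ m11 hIm)
    intro i j; fin_cases i <;> fin_cases j
    · show Matrix.single (0:Fin 2) (0:Fin 2) (1:L) ∈ Algebra.adjoin L ({I,J} : Set _)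
      rw [stdBasis00]; exact m11
    · show Matrix.single (0:Fin 2) (1:Fin 2) (1:L) ∈ Algebra.adjoin L ({I,J} : Set _)
      rw [stdBasis01]; exact m12
    · show Matrix.single (1:Fin 2) (0:Fin 2) (1:L) ∈ Algebra.adjoin L ({I,J} : Set _)
      rw [stdBasis10]; exact m21
    · show Matrix.single (1:Fin 2) (1:Fin 2) (1:L) ∈ Algebra.adjoin L ({I,J} : Set _)
      rw [stdBasis11]; exact m22

lemma splitC (htwo : (2:L) = 0) (r : L) (hr : r ≠ 0) (heq : r*r = a) : QuatSplit L x a := by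
  apply quatSplit_of_matrix x a !![0,x;1,1] !![r,r;0,r]
  · ext i j; fin_cases i <;> fin_cases j <;>
      simp [Matrix.mul_apply, Fin.sum_univ_two, Matrix.one_apply] <;>
      first
        | ring1
        | linear_combination x*htwo
        | linear_combination htwo
  · ext i j; fin_cases i <;> fin_cases j <;>
      simp [Matrix.mul_apply, Fin.sum_univ_two, Matrix.one_apply] <;>
      first
        | ring1
        | linear_combination heq
        | linear_combination (r*r)*htwo
  · ext i j; fin_cases i <;> fin_cases j <;>
      simp [Matrix.mul_apply, Fin.sum_univ_two, Matrix.one_apply] <;>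
      first
        | ring1
        | linear_combination (-r)*htwo
        | linear_combination r*htwo
        | linear_combination (2*r)*htwo
        | linear_combination (-(2*r))*htwo
  · set I : Matrix (Fin 2) (Fin 2) L := !![0,x;1,1] with hI
    set J : Matrix (Fin 2) (Fin 2) L := !![r,r;0,r] with hJ
    have hIm : I ∈ Algebra.adjoin L ({I, J} : Set (Matrix (Fin 2) (Fin 2) L)) :=
      Algebra.subset_adjoin (by simp)
    have hJm : J ∈ Algebra.adjoin L ({I, J} : Set (Matrix (Fin 2) (Fin 2) L)) :=
      Algebra.subset_adjoin (by simp)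
    have h12 : r • (!![0,1;0,0] : Matrix (Fin 2) (Fin 2) L) = J - r • 1 := by
      ext i j; fin_cases i <;> fin_cases j <;> simp [hJ, Matrix.one_apply]
    have m12 : (!![0,1;0,0] : Matrix (Fin 2) (Fin 2) L) ∈ Algebra.adjoin L {I, J} :=
      mem_of_smul_eq hr h12 (Subalgebra.sub_mem _ hJm
        (Subalgebra.smul_mem _ (Subalgebra.one_mem _) r))
    have h21 : r • (!![0,0;1,0] : Matrix (Fin 2) (Fin 2) L)
        = I * J + (x*r) • !![0,1;0,0] := by
      ext i j; fin_cases i <;> fin_cases j <;>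
        simp [hI, hJ, Matrix.mul_apply, Fin.sum_univ_two] <;>
        first
          | ring1
          | linear_combination (-(x*r))*htwo
          | linear_combination (-r)*htwo
    have m21 : (!![0,0;1,0] : Matrix (Fin 2) (Fin 2) L) ∈ Algebra.adjoin L {I, J} :=
      mem_of_smul_eq hr h21 (Subalgebra.add_mem _ (Subalgebra.mul_mem _ hIm hJm)
        (Subalgebra.smul_mem _ m12 _))
    have h22 : (!![0,0;0,1] : Matrix (Fin 2) (Fin 2) L)
        = I - x • !![0,1;0,0] - !![0,0;1,0] := by
      ext i j; fin_cases i <;> fin_cases j <;> simp [hI]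
    have m22 : (!![0,0;0,1] : Matrix (Fin 2) (Fin 2) L) ∈ Algebra.adjoin L {I, J} := by
      rw [h22]
      exact Subalgebra.sub_mem _ (Subalgebra.sub_mem _ hIm (Subalgebra.smul_mem _ m12 _)) m21
    have h11 : (!![1,0;0,0] : Matrix (Fin 2) (Fin 2) L) = 1 - !![0,0;0,1] := by
      ext i j; fin_cases i <;> fin_cases j <;> simp [Matrix.one_apply]
    have m11 : (!![1,0;0,0] : Matrix (Fin 2) (Fin 2) L) ∈ Algebra.adjoin L {I, J} := by
      rw [h11]; exact Subalgebra.sub_mem _ (Subalgebra.one_mem _) m22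
    intro i j; fin_cases i <;> fin_cases j
    · show Matrix.single (0:Fin 2) (0:Fin 2) (1:L) ∈ Algebra.adjoin L ({I,J} : Set _)
      rw [stdBasis00]; exact m11
    · show Matrix.single (0:Fin 2) (1:Fin 2) (1:L) ∈ Algebra.adjoin L ({I,J} : Set _)
      rw [stdBasis01]; exact m12
    · show Matrix.single (1:Fin 2) (0:Fin 2) (1:L) ∈ Algebra.adjoin L ({I,J} : Set _)
      rw [stdBasis10]; exact m21
    · show Matrix.single (1:Fin 2) (1:Fin 2) (1:L) ∈ Algebra.adjoin L ({I,J} : Set _)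
      rw [stdBasis11]; exact m22

lemma split_of_conic (htwo : (2:L) = 0) (hx : x ≠ 0) (ha : a ≠ 0) (u0 u1 w : L)
    (hE : a * (u0^2 + u0*u1 + x*u1^2) = w^2) (hne : u0 ≠ 0 ∨ u1 ≠ 0) :
    QuatSplit L x a := by
  by_cases h1 : u1 = 0
  · subst h1
    have hu0 : u0 ≠ 0 := hne.resolve_right (by simp)
    refine splitC x a htwo (w/u0) ?_ ?_
    · intro h
      apply ha
      have hw : w = 0 := by
        rcases div_eq_zero_iff.mp h with h' | h'
        · exact h'
        · exact absurd h' hu0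
      subst hw
      have hz : a * u0^2 = 0 := by linear_combination hE
      rcases mul_eq_zero.mp hz with h' | h'
      · exact h'
      · exact absurd (pow_eq_zero_iff (by norm_num) |>.mp h') hu0
    · field_simp
      first
        | linear_combination hE
        | linear_combination (-1 : L)*hE
  · by_cases hn : u0^2 + u0*u1 + x*u1^2 = 0
    · refine splitA x a htwo ha (u0/u1) ?_
      have h2' : u0^2 + u0*u1 = x*u1^2 := by
        linear_combination (-1 : L)*hn + (u0^2+u0*u1)*htwo
      rw [div_pow, div_add_div _ _ (pow_ne_zero 2 h1) h1,
        eq_div_iff (mul_ne_zero (pow_ne_zero 2 h1) h1)]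
      first
        | linear_combination u1*h2'
        | linear_combination (-u1)*h2'
        | linear_combination u0*h2'
        | linear_combination (-u0)*h2'
    · have hwne : w ≠ 0 := by
        intro h
        subst h
        rcases mul_eq_zero.mp (by linear_combination hE : a * (u0^2 + u0*u1 + x*u1^2) = 0) with
          h' | h'
        · exact ha h'
        · exact hn h'
      refine splitB x a htwo hx ha (w*u0/(u0^2 + u0*u1 + x*u1^2))
        (w*u1/(u0^2 + u0*u1 + x*u1^2)) ?_ ?_
      · exact div_ne_zero (mul_ne_zero hwne h1) hn
      · have step1 : (w*u0/(u0^2 + u0*u1 + x*u1^2))^2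
            + (w*u0/(u0^2 + u0*u1 + x*u1^2))*(w*u1/(u0^2 + u0*u1 + x*u1^2))
            + x*(w*u1/(u0^2 + u0*u1 + x*u1^2))^2
            = w^2*(u0^2 + u0*u1 + x*u1^2)/((u0^2 + u0*u1 + x*u1^2)^2) := by
          field_simp
        rw [step1, ← hE]
        field_simp
        exact div_self (by intro h; apply hn; linear_combination h)

end QuatHelp

def IsDivisionAlgebra (T : Type) [Ring T] : Prop :=
  (0 : T) ≠ 1 ∧ ∀ x : T, x ≠ 0 → IsUnit x


theorem stmt11 (F : Type) [Field F] [CharP F 2] (a x : Fˣ) (s : ℕ) (c : Fin s → Fˣ)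
    (hφa : (((a : F) • binQF 1 (x : F)).prod
      (diagQF (Matrix.vecCons 1 fun i => (c i : F)))).Anisotropic)
    (K : Type) [Field K] [Algebra F K]
    (hW : ∃ (n0 k : ℕ) (φan : QuadraticForm K (Fin k → K)), φan.Anisotropic ∧
      (((algebraMap F K (a : F)) • binQF 1 (algebraMap F K (x : F))).prod
        (diagQF (Matrix.vecCons 1 fun i => algebraMap F K (c i : F)))).Equivalent
        ((φan.prod (hypQF K 1)).prod (diagQF fun _ : Fin n0 => (0 : K)))) :
    QuatSplit (↥(sqrtExt K fun i => algebraMap F K (c i : F)))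
      (algebraMap K (↥(sqrtExt K fun i => algebraMap F K (c i : F)))
        (algebraMap F K (x : F)))
      (algebraMap K (↥(sqrtExt K fun i => algebraMap F K (c i : F)))
        (algebraMap F K (a : F))) := by
  classical
  obtain ⟨n0, k, φan, _hφanA, ⟨e⟩⟩ := hW
  set x' : K := algebraMap F K (x : F) with hx'def
  set a' : K := algebraMap F K (a : F) with ha'def
  set c' : Fin s → K := fun i => algebraMap F K (c i : F) with hc'def
  have h2F : (2:F) = 0 := by exact_mod_cast CharP.cast_eq_zero F 2
  have h2K : (2:K) = 0 := by
    have h : algebraMap F K (2:F) = (2:K) := map_ofNat _ 2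
    rw [← h, h2F, map_zero]
  haveI : CharP K 2 := charP_of_injective_algebraMap (algebraMap F K).injective 2
  -- model vectors
  set ψ := (φan.prod (hypQF K 1)).prod (diagQF fun _ : Fin n0 => (0:K)) with hψdef
  set v₁ : ((Fin k → K) × (Fin 1 → Fin 2 → K)) × (Fin n0 → K) := ((0, fun _ => ![1,0]), 0)
    with hv₁def
  set v₂ : ((Fin k → K) × (Fin 1 → Fin 2 → K)) × (Fin n0 → K) := ((0, fun _ => ![0,1]), 0)
    with hv₂def
  have hv₁ : ψ v₁ = 0 := by
    simp [hψdef, hv₁def, QuadraticMap.prod_apply, hypQF, binsQF, QuadraticMap.pi_apply,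
      diagQF, QuadraticMap.weightedSumSquares_apply, binQF_apply]
  have hv₂ : ψ v₂ = 0 := by
    simp [hψdef, hv₂def, QuadraticMap.prod_apply, hypQF, binsQF, QuadraticMap.pi_apply,
      diagQF, QuadraticMap.weightedSumSquares_apply, binQF_apply]
  have hv₁₂ : ψ (v₁ + v₂) = 1 := by
    simp [hψdef, hv₁def, hv₂def, Prod.add_def, QuadraticMap.prod_apply, hypQF, binsQF,
      QuadraticMap.pi_apply, diagQF, QuadraticMap.weightedSumSquares_apply, binQF_apply,
      Pi.add_apply]
  set w₁ := e.symm v₁ with hw₁def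
  set w₂ := e.symm v₂ with hw₂def
  have hw₁ : ((a' • binQF 1 x').prod (diagQF (Matrix.vecCons 1 c'))) w₁ = 0 :=
    (e.symm.map_app v₁).trans hv₁
  have hw₂ : ((a' • binQF 1 x').prod (diagQF (Matrix.vecCons 1 c'))) w₂ = 0 :=
    (e.symm.map_app v₂).trans hv₂
  have hw₁₂ : ((a' • binQF 1 x').prod (diagQF (Matrix.vecCons 1 c'))) (w₁ + w₂) = 1 := by
    have hadd : e.symm (v₁ + v₂) = w₁ + w₂ := map_add e.symm v₁ v₂
    have := (e.symm.map_app (v₁ + v₂)).trans hv₁₂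
    rwa [hadd] at this
  -- expansion of the form
  have hphiK : ∀ m : (Fin 2 → K) × (Fin (s+1) → K),
      ((a' • binQF 1 x').prod (diagQF (Matrix.vecCons 1 c'))) m
        = a' * (m.1 0^2 + m.1 0 * m.1 1 + x' * m.1 1^2)
          + (m.2 0^2 + ∑ i : Fin s, c' i * m.2 i.succ^2) := by
    intro m
    rw [QuadraticMap.prod_apply, QuadraticMap.smul_apply, binQF_apply, diagQF,
      QuadraticMap.weightedSumSquares_apply, Fin.sum_univ_succ]
    simp only [Matrix.cons_val_zero, Matrix.cons_val_succ, smul_eq_mul]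
    ring
  have eq1 : a' * (w₁.1 0^2 + w₁.1 0 * w₁.1 1 + x' * w₁.1 1^2)
      + (w₁.2 0^2 + ∑ i : Fin s, c' i * w₁.2 i.succ^2) = 0 := by
    rw [← hphiK w₁]; exact hw₁
  have eq2 : a' * (w₂.1 0^2 + w₂.1 0 * w₂.1 1 + x' * w₂.1 1^2)
      + (w₂.2 0^2 + ∑ i : Fin s, c' i * w₂.2 i.succ^2) = 0 := by
    rw [← hphiK w₂]; exact hw₂
  have eq3 : a' * ((w₁.1 0 + w₂.1 0)^2 + (w₁.1 0 + w₂.1 0) * (w₁.1 1 + w₂.1 1)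
        + x' * (w₁.1 1 + w₂.1 1)^2)
      + ((w₁.2 0 + w₂.2 0)^2 + ((∑ i : Fin s, c' i * w₁.2 i.succ^2)
        + ∑ i : Fin s, c' i * w₂.2 i.succ^2)) = 1 := by
    have h := hphiK (w₁ + w₂)
    rw [hw₁₂] at h
    have hsplit : (∑ i : Fin s, c' i * (w₁.2 i.succ + w₂.2 i.succ)^2)
        = (∑ i : Fin s, c' i * w₁.2 i.succ^2) + ∑ i : Fin s, c' i * w₂.2 i.succ^2 := by
      rw [← Finset.sum_add_distrib]
      refine Finset.sum_congr rfl fun i _ => ?_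
      rw [add_pow_char]
      ring
    simp only [Prod.fst_add, Prod.snd_add, Pi.add_apply] at h
    rw [hsplit] at h
    exact h.symm
  have hcross : a' * (w₁.1 0 * w₂.1 1 + w₁.1 1 * w₂.1 0) = 1 := by
    first
      | linear_combination eq3 - eq1 - eq2
        - (a' * (w₁.1 0 * w₂.1 0) + a' * x' * (w₁.1 1 * w₂.1 1) + w₁.2 0 * w₂.2 0) * h2K
      | linear_combination eq3 - eq1 - eq2
        + (a' * (w₁.1 0 * w₂.1 0) + a' * x' * (w₁.1 1 * w₂.1 1) + w₁.2 0 * w₂.2 0) * h2K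
  have hne : w₁.1 0 ≠ 0 ∨ w₁.1 1 ≠ 0 := by
    by_contra hcon
    push_neg at hcon
    rw [hcon.1, hcon.2] at hcross
    simp at hcross
  -- pass to the extension field
  haveI : CharP (↥(sqrtExt K c')) 2 :=
    charP_of_injective_algebraMap (algebraMap K ↥(sqrtExt K c')).injective 2
  have h2L : (2 : ↥(sqrtExt K c')) = 0 := by
    exact_mod_cast CharP.cast_eq_zero (↥(sqrtExt K c')) 2
  set ρ : K →+* ↥(sqrtExt K c') := algebraMap K ↥(sqrtExt K c') with hρdef
  have hroot : ∀ i : Fin s, ∃ r : ↥(sqrtExt K c'), r^2 = ρ (c' i) := by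
    intro i
    obtain ⟨y, hy⟩ := IsAlgClosed.exists_pow_nat_eq
      (k := AlgebraicClosure K) (algebraMap K _ (c' i)) (n := 2) (by norm_num)
    have hymem : y ∈ sqrtExt K c' := IntermediateField.subset_adjoin _ _ ⟨i, hy⟩
    refine ⟨⟨y, hymem⟩, ?_⟩
    apply Subtype.ext
    push_cast
    rw [hy]
    rfl
  choose r hr using hroot
  have hW2 : (ρ (w₁.2 0) + ∑ i : Fin s, r i * ρ (w₁.2 i.succ))^2
      = ρ (w₁.2 0)^2 + ∑ i : Fin s, ρ (c' i) * ρ (w₁.2 i.succ)^2 := by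
    rw [add_pow_char, sum_pow_char]
    congr 1
    refine Finset.sum_congr rfl fun i _ => ?_
    rw [mul_pow, hr]
  have eq1L : ρ a' * (ρ (w₁.1 0)^2 + ρ (w₁.1 0) * ρ (w₁.1 1) + ρ x' * ρ (w₁.1 1)^2)
      + (ρ (w₁.2 0)^2 + ∑ i : Fin s, ρ (c' i) * ρ (w₁.2 i.succ)^2) = 0 := by
    have h := congrArg ρ eq1
    simpa [map_add, map_mul, map_pow, map_sum, map_zero] using h
  have hE : ρ a' * (ρ (w₁.1 0)^2 + ρ (w₁.1 0) * ρ (w₁.1 1) + ρ x' * ρ (w₁.1 1)^2)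
      = (ρ (w₁.2 0) + ∑ i : Fin s, r i * ρ (w₁.2 i.succ))^2 := by
    first
      | linear_combination eq1L - hW2
        - (ρ (w₁.2 0)^2 + ∑ i : Fin s, ρ (c' i) * ρ (w₁.2 i.succ)^2) * h2L
      | linear_combination eq1L - hW2
        + (ρ (w₁.2 0)^2 + ∑ i : Fin s, ρ (c' i) * ρ (w₁.2 i.succ)^2) * h2L
  have hKinj : Function.Injective ρ := ρ.injective
  have hx'0 : x' ≠ 0 := by
    rw [hx'def]
    intro h
    exact Units.ne_zero x ((algebraMap F K).injective (by rw [h, map_zero]))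
  have ha'0 : a' ≠ 0 := by
    rw [ha'def]
    intro h
    exact Units.ne_zero a ((algebraMap F K).injective (by rw [h, map_zero]))
  have hx0 : ρ x' ≠ 0 := fun h => hx'0 (hKinj (by rw [h, map_zero]))
  have ha0 : ρ a' ≠ 0 := fun h => ha'0 (hKinj (by rw [h, map_zero]))
  have hneL : ρ (w₁.1 0) ≠ 0 ∨ ρ (w₁.1 1) ≠ 0 := by
    refine hne.imp (fun h hh => h ?_) (fun h hh => h ?_)
    · exact hKinj (by rw [hh, map_zero])
    · exact hKinj (by rw [hh, map_zero])
  exact QuatHelp.split_of_conic (ρ x') (ρ a') h2L hx0 ha0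
    (ρ (w₁.1 0)) (ρ (w₁.1 1)) (ρ (w₁.2 0) + ∑ i : Fin s, r i * ρ (w₁.2 i.succ)) hE hneL
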